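/- Let G be a finite group generated by subnormal subgroups A and B such that the images of A and B in G/F(G) have coprime orders. Then G/F(G) is the (internal) direct product of the images of A and B. -/

import Mathlib

/-- A subgroup `H` of `G` is subnormal if there is a chain
`H = c 0 ≤ c 1 ≤ ... ≤ c n = G` with each term normal in the next. -/
def Subgroup.IsSubnormalChain {G : Type*} [Group G] (H : Subgroup G) : Prop :=
  ∃ (n : ℕ) (c : Fin (n + 1) → Subgroup G),
    c 0 = H ∧ c (Fin.last n) = ⊤ ∧
    ∀ i : Fin n, c i.castSucc ≤ c i.succ ∧
      ((c i.castSucc).subgroupOf (c i.succ)).Normal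

/-- A group is supersoluble if it has a normal series (all terms normal in `G`)
with cyclic factors; the factor `c (i+1) / c i` being cyclic is expressed as
`c (i+1)` being generated by `c i` together with a single element. -/
def IsSupersolvable (G : Type*) [Group G] : Prop :=
  ∃ (n : ℕ) (c : Fin (n + 1) → Subgroup G),
    c 0 = ⊥ ∧ c (Fin.last n) = ⊤ ∧
    (∀ i, (c i).Normal) ∧
    ∀ i : Fin n, c i.castSucc ≤ c i.succ ∧
      ∃ g ∈ c i.succ, c i.succ ≤ c i.castSucc ⊔ Subgroup.zpowers g

/-- The Fitting subgroup: the join of all normal nilpotent subgroups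
(in a finite group, the largest normal nilpotent subgroup). -/
def fittingSubgroup (G : Type*) [Group G] : Subgroup G :=
  sSup {N : Subgroup G | N.Normal ∧ Group.IsNilpotent N}

instance fittingSubgroup_normal (G : Type*) [Group G] : (fittingSubgroup G).Normal := by
  constructor
  intro x hx g
  rw [fittingSubgroup, sSup_eq_iSup'] at hx ⊢
  refine Subgroup.iSup_induction
    (C := fun y => g * y * g⁻¹ ∈
      ⨆ (N : {N : Subgroup G // N.Normal ∧ Group.IsNilpotent N}), (N : Subgroup G))
    _ hx (fun N y hy => ?_) (by simpa using Subgroup.one_mem _) (fun y z hy hz => ?_)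
  · exact Subgroup.mem_iSup_of_mem N (N.2.1.conj_mem y hy g)
  · simpa [mul_assoc] using Subgroup.mul_mem _ hy hz

/-- `O_p(G)`: the join of all normal `p`-subgroups
(in a finite group, the largest normal `p`-subgroup). -/
def pCore (p : ℕ) (G : Type*) [Group G] : Subgroup G :=
  sSup {N : Subgroup G | N.Normal ∧ IsPGroup p N}

instance pCore_normal (p : ℕ) (G : Type*) [Group G] : (pCore p G).Normal := by
  constructor
  intro x hx g
  rw [pCore, sSup_eq_iSup'] at hx ⊢
  refine Subgroup.iSup_induction
    (C := fun y => g * y * g⁻¹ ∈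
      ⨆ (N : {N : Subgroup G // N.Normal ∧ IsPGroup p N}), (N : Subgroup G))
    _ hx (fun N y hy => ?_) (by simpa using Subgroup.one_mem _) (fun y z hy hz => ?_)
  · exact Subgroup.mem_iSup_of_mem N (N.2.1.conj_mem y hy g)
  · simpa [mul_assoc] using Subgroup.mul_mem _ hy hz

/-- `G` has a Sylow tower of supersoluble type: a normal series `⊥ = c 0 ≤ ... ≤ c n = ⊤`
(all terms normal in `G`) together with strictly decreasing primes `p 0 > p 1 > ... `
exhausting the primes dividing `|G|`, such that each factor `c (i+1) / c i` is a
Sylow `p i`-subgroup of `G / c i` (i.e. has order the full `p i`-part of `|G|`). -/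
def HasSupersolubleSylowTower (G : Type*) [Group G] : Prop :=
  ∃ (n : ℕ) (c : Fin (n + 1) → Subgroup G) (p : Fin n → ℕ),
    c 0 = ⊥ ∧ c (Fin.last n) = ⊤ ∧
    (∀ i, (c i).Normal) ∧
    (∀ i : Fin n, c i.castSucc ≤ c i.succ) ∧
    (∀ i, (p i).Prime) ∧
    (∀ i j : Fin n, i < j → p j < p i) ∧
    (∀ q : ℕ, q.Prime → q ∣ Nat.card G → ∃ i, p i = q) ∧
    (∀ i : Fin n,
      Nat.card (c i.succ) = Nat.card (c i.castSucc) * p i ^ (Nat.card G).factorization (p i))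

namespace WielandtAux

variable {G : Type*} [Group G]

/-- Subnormality with defect counted from the top. -/
def SN : ℕ → Subgroup G → Prop
  | 0, A => A = ⊤
  | n + 1, A => ∃ K : Subgroup G, SN n K ∧ A ≤ K ∧ ∀ k ∈ K, ∀ a ∈ A, k * a * k⁻¹ ∈ A

lemma normalIn_of_subgroupOf_normal {A K : Subgroup G} (hle : A ≤ K)
    (h : (A.subgroupOf K).Normal) : ∀ k ∈ K, ∀ a ∈ A, k * a * k⁻¹ ∈ A := by
  intro k hk a ha
  have := h.conj_mem ⟨a, hle ha⟩ (by simpa [Subgroup.mem_subgroupOf] using ha) ⟨k, hk⟩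
  simpa [Subgroup.mem_subgroupOf] using this

lemma sn_of_chain : ∀ (n : ℕ) (c : Fin (n + 1) → Subgroup G),
    c (Fin.last n) = ⊤ →
    (∀ i : Fin n, c i.castSucc ≤ c i.succ ∧
      ((c i.castSucc).subgroupOf (c i.succ)).Normal) → SN n (c 0) := by
  intro n
  induction n with
  | zero =>
    intro c hlast _
    show c 0 = ⊤
    simpa using hlast
  | succ n ih =>
    intro c hlast hstep
    have h0 := hstep 0
    refine ⟨c (Fin.succ 0), ?_, by simpa using h0.1,
      normalIn_of_subgroupOf_normal (by simpa using h0.1) (by simpa using h0.2)⟩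
    have := ih (fun j => c j.succ) (by simpa [Fin.succ_last] using hlast) ?_
    · exact this
    · intro i
      have := hstep i.succ
      constructor
      · simpa only [Fin.succ_castSucc] using this.1
      · simpa only [Fin.succ_castSucc] using this.2

lemma sn_of_isSubnormal {A : Subgroup G} (h : A.IsSubnormalChain) : ∃ n, SN n A := by
  obtain ⟨n, c, h0, hlast, hstep⟩ := h
  exact ⟨n, h0 ▸ sn_of_chain n c hlast hstep⟩

lemma sn_map {G' : Type*} [Group G'] (f : G →* G') (hf : Function.Surjective f) :
    ∀ (n : ℕ) (A : Subgroup G), SN n A → SN n (A.map f) := by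
  intro n
  induction n with
  | zero =>
    intro A hA
    show A.map f = ⊤
    rw [show A = ⊤ from hA]
    exact Subgroup.map_top_of_surjective f hf
  | succ n ih =>
    rintro A ⟨K, hK, hle, hnorm⟩
    refine ⟨K.map f, ih K hK, Subgroup.map_mono hle, ?_⟩
    rintro _ ⟨k, hk, rfl⟩ _ ⟨a, ha, rfl⟩
    refine ⟨k * a * k⁻¹, hnorm k hk a ha, by simp⟩

/-- `N` is a π-group. -/
def IsPi (π : Set ℕ) (N : Subgroup G) : Prop :=
  ∀ q : ℕ, q.Prime → q ∣ Nat.card N → q ∈ π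

/-- Normal π-subgroups of `H` (as subgroups of `G`). -/
def piSet (π : Set ℕ) (H : Subgroup G) : Set (Subgroup G) :=
  {N | N ≤ H ∧ (∀ h ∈ H, ∀ x ∈ N, h * x * h⁻¹ ∈ N) ∧ IsPi π N}

/-- The relative π-core: the join of all normal π-subgroups of `H`. -/
def piCoreRel (π : Set ℕ) (H : Subgroup G) : Subgroup G := sSup (piSet π H)

lemma conj_mem_sSup (T : Set (Subgroup G)) (g : G)
    (hT : ∀ N ∈ T, N.map (MulAut.conj g).toMonoidHom ∈ T) :
    ∀ x ∈ sSup T, g * x * g⁻¹ ∈ sSup T := by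
  intro x hx
  rw [sSup_eq_iSup'] at hx ⊢
  refine Subgroup.iSup_induction (C := fun y => g * y * g⁻¹ ∈ ⨆ N : T, (N : Subgroup G))
    _ hx (fun N y hy => ?_) (by simpa using Subgroup.one_mem _) (fun y z hy hz => ?_)
  · refine Subgroup.mem_iSup_of_mem ⟨_, hT N N.2⟩ ?_
    simpa [mul_assoc] using Subgroup.mem_map_of_mem (MulAut.conj g).toMonoidHom hy
  · simpa [mul_assoc] using Subgroup.mul_mem _ hy hz

section Finite

variable [Finite G]

lemma card_sup_dvd {N M : Subgroup G}
    (hN : ∀ g ∈ (N ⊔ M : Subgroup G), ∀ x ∈ N, g * x * g⁻¹ ∈ N) :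
    Nat.card ↥(N ⊔ M : Subgroup G) ∣ Nat.card N * Nat.card M := by
  set J : Subgroup G := N ⊔ M with hJ
  have hNle : N ≤ J := le_sup_left
  have hMle : M ≤ J := le_sup_right
  haveI : (N.subgroupOf J).Normal := by
    constructor
    rintro ⟨x, hxJ⟩ hx ⟨g, hg⟩
    simp only [Subgroup.mem_subgroupOf] at hx ⊢
    exact hN g hg x hx
  have hsup : M.subgroupOf J ⊔ N.subgroupOf J = ⊤ := by
    rw [← Subgroup.subgroupOf_sup hMle hNle]
    rw [show M ⊔ N = J by rw [hJ, sup_comm]]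
    exact Subgroup.subgroupOf_self J
  have hsurj : Function.Surjective
      ((QuotientGroup.mk' (N.subgroupOf J)).comp (M.subgroupOf J).subtype) := by
    intro q
    obtain ⟨g, rfl⟩ := QuotientGroup.mk'_surjective _ q
    have hg : g ∈ M.subgroupOf J ⊔ N.subgroupOf J := by rw [hsup]; trivial
    rw [← SetLike.mem_coe, Subgroup.mul_normal] at hg
    obtain ⟨m, hm, n, hn, rfl⟩ := hg
    refine ⟨⟨m, hm⟩, ?_⟩
    simp only [MonoidHom.comp_apply, Subgroup.coe_subtype, QuotientGroup.mk'_apply]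
    exact (QuotientGroup.mk'_eq_mk' _).mpr ⟨n, hn, rfl⟩
  have h1 : Nat.card N * (N.subgroupOf J).index = Nat.card ↥J := by
    rw [← Subgroup.card_mul_index (N.subgroupOf J)]
    congr 1
    exact (Nat.card_congr (Subgroup.subgroupOfEquivOfLe hNle).toEquiv).symm
  have h2 : (N.subgroupOf J).index ∣ Nat.card M := by
    rw [Subgroup.index_eq_card]
    refine (Subgroup.card_dvd_of_surjective _ hsurj).trans ?_
    exact dvd_of_eq (Nat.card_congr (Subgroup.subgroupOfEquivOfLe hMle).toEquiv)
  calc Nat.card ↥J = Nat.card N * (N.subgroupOf J).index := h1.symm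
    _ ∣ Nat.card N * Nat.card M := mul_dvd_mul_left _ h2

lemma piSet_bot_mem (π : Set ℕ) (H : Subgroup G) : (⊥ : Subgroup G) ∈ piSet π H := by
  refine ⟨bot_le, ?_, ?_⟩
  · intro h hh x hx
    rw [Subgroup.mem_bot] at hx
    simp [hx]
  · intro q hq hd
    rw [show Nat.card ↥(⊥ : Subgroup G) = 1 by simp, Nat.dvd_one] at hd
    exact absurd hd hq.ne_one

lemma piSet_sup_mem {π : Set ℕ} {H : Subgroup G} {N M : Subgroup G}
    (hN : N ∈ piSet π H) (hM : M ∈ piSet π H) : N ⊔ M ∈ piSet π H := by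
  obtain ⟨hN1, hN2, hN3⟩ := hN
  obtain ⟨hM1, hM2, hM3⟩ := hM
  have hconj : ∀ h ∈ H, ∀ x ∈ N ⊔ M, h * x * h⁻¹ ∈ N ⊔ M := by
    intro h hh x hx
    have hmap : (N ⊔ M).map (MulAut.conj h).toMonoidHom ≤ N ⊔ M := by
      rw [Subgroup.map_sup]
      refine sup_le (le_trans ?_ le_sup_left) (le_trans ?_ le_sup_right)
      · rintro _ ⟨y, hy, rfl⟩
        simpa [mul_assoc] using hN2 h hh y hy
      · rintro _ ⟨y, hy, rfl⟩
        simpa [mul_assoc] using hM2 h hh y hy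
    have := hmap (Subgroup.mem_map_of_mem _ hx)
    simpa [mul_assoc] using this
  refine ⟨sup_le hN1 hM1, hconj, ?_⟩
  intro q hq hd
  have hdvd : Nat.card ↥(N ⊔ M : Subgroup G) ∣ Nat.card N * Nat.card M := by
    refine card_sup_dvd ?_
    intro g hg x hx
    exact hN2 g (sup_le hN1 hM1 hg) x hx
  rcases (Nat.Prime.dvd_mul hq).mp (hd.trans hdvd) with h | h
  · exact hN3 q hq h
  · exact hM3 q hq h

lemma piCoreRel_mem (π : Set ℕ) (H : Subgroup G) : piCoreRel π H ∈ piSet π H := by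
  classical
  haveI : Finite (Subgroup G) :=
    Finite.of_injective (fun K : Subgroup G => (K : Set G)) SetLike.coe_injective
  have hfin : (piSet π H).Finite := Set.toFinite _
  have key : ∀ t : Finset (Subgroup G), (∀ x ∈ t, x ∈ piSet π H) →
      t.sup id ∈ piSet π H := by
    intro t
    induction t using Finset.induction_on with
    | empty => intro _; simpa using piSet_bot_mem π H
    | insert _ _ hx ih =>
      intro hmem
      rw [Finset.sup_insert]
      exact piSet_sup_mem (hmem _ (Finset.mem_insert_self _ _))
        (ih fun x hx => hmem x (Finset.mem_insert_of_mem hx))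
  have : piCoreRel π H = hfin.toFinset.sup id := by
    rw [Finset.sup_id_eq_sSup, Set.Finite.coe_toFinset, piCoreRel]
  rw [this]
  exact key _ (fun x hx => hfin.mem_toFinset.mp hx)

lemma le_piCoreRel {π : Set ℕ} {H N : Subgroup G} (h : N ∈ piSet π H) :
    N ≤ piCoreRel π H := le_sSup h

/-- Key transfer: if `K` is normal-in-`L`, the π-core of `K` is a normal π-subgroup of `L`. -/
lemma piCoreRel_mem_piSet_of_normalIn {π : Set ℕ} {K L : Subgroup G} (hle : K ≤ L)
    (hnorm : ∀ l ∈ L, ∀ k ∈ K, l * k * l⁻¹ ∈ K) :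
    piCoreRel π K ∈ piSet π L := by
  obtain ⟨h1, h2, h3⟩ := piCoreRel_mem π K
  refine ⟨h1.trans hle, ?_, h3⟩
  intro l hl x hx
  refine conj_mem_sSup _ l ?_ x hx
  rintro N ⟨hN1, hN2, hN3⟩
  refine ⟨?_, ?_, ?_⟩
  · rintro _ ⟨y, hy, rfl⟩
    simpa [mul_assoc] using hnorm l hl y (hN1 hy)
  · rintro k hk _ ⟨y, hy, rfl⟩
    have hk' : l⁻¹ * k * l ∈ K := by
      simpa using hnorm l⁻¹ (inv_mem hl) k hk
    have hy' : (l⁻¹ * k * l) * y * (l⁻¹ * k * l)⁻¹ ∈ N := hN2 _ hk' y hy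
    refine ⟨_, hy', ?_⟩
    simp only [MulEquiv.coe_toMonoidHom, MulAut.conj_apply]
    group
  · intro q hq hd
    refine hN3 q hq ?_
    refine hd.trans (dvd_of_eq (Nat.card_congr ?_))
    exact (Subgroup.equivMapOfInjective N _ (MulAut.conj l).injective).toEquiv.symm

lemma piCoreRel_le_of_sn (π : Set ℕ) :
    ∀ (n : ℕ) (K : Subgroup G), SN n K → piCoreRel π K ≤ piCoreRel π (⊤ : Subgroup G) := by
  intro n
  induction n with
  | zero =>
    intro K hK
    rw [show K = ⊤ from hK]
  | succ n ih =>
    rintro K ⟨L, hL, hle, hnorm⟩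
    calc piCoreRel π K ≤ piCoreRel π L :=
          le_piCoreRel (piCoreRel_mem_piSet_of_normalIn hle hnorm)
      _ ≤ piCoreRel π ⊤ := ih L hL

lemma le_piCore_of_sn {π : Set ℕ} {A : Subgroup G} (hA : ∃ n, SN n A) (hpi : IsPi π A) :
    A ≤ piCoreRel π (⊤ : Subgroup G) := by
  obtain ⟨n, hn⟩ := hA
  have hself : A ≤ piCoreRel π A :=
    le_piCoreRel ⟨le_rfl, fun h hh x hx => Subgroup.mul_mem _ (Subgroup.mul_mem _ hh hx)
      (inv_mem hh), hpi⟩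
  exact hself.trans (piCoreRel_le_of_sn π n A hn)

/-- Wielandt: subnormal subgroups of coprime orders centralize each other. -/
theorem commute_of_sn {A B : Subgroup G} (hA : ∃ n, SN n A) (hB : ∃ n, SN n B)
    (hcop : Nat.Coprime (Nat.card A) (Nat.card B)) :
    ∀ a ∈ A, ∀ b ∈ B, a * b = b * a := by
  set πA : Set ℕ := {q | q.Prime ∧ q ∣ Nat.card A} with hπA
  set πB : Set ℕ := {q | q.Prime ∧ q ∣ Nat.card B} with hπB
  set PA := piCoreRel πA (⊤ : Subgroup G) with hPA
  set PB := piCoreRel πB (⊤ : Subgroup G) with hPB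
  have hAle : A ≤ PA := le_piCore_of_sn hA (fun q hq hd => ⟨hq, hd⟩)
  have hBle : B ≤ PB := le_piCore_of_sn hB (fun q hq hd => ⟨hq, hd⟩)
  obtain ⟨_, hPAn, hPApi⟩ := piCoreRel_mem πA (⊤ : Subgroup G)
  obtain ⟨_, hPBn, hPBpi⟩ := piCoreRel_mem πB (⊤ : Subgroup G)
  have hcopP : Nat.Coprime (Nat.card PA) (Nat.card PB) := by
    rw [Nat.coprime_iff_gcd_eq_one]
    by_contra hne
    obtain ⟨q, hq, hdq⟩ := Nat.exists_prime_and_dvd hne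
    have h1 : q ∣ Nat.card A := (hPApi q hq (hdq.trans (Nat.gcd_dvd_left _ _))).2
    have h2 : q ∣ Nat.card B := (hPBpi q hq (hdq.trans (Nat.gcd_dvd_right _ _))).2
    have h3 : q ∣ Nat.gcd (Nat.card A) (Nat.card B) := Nat.dvd_gcd h1 h2
    rw [hcop.gcd_eq_one, Nat.dvd_one] at h3
    exact hq.ne_one h3
  have hinf : PA ⊓ PB = ⊥ := by
    have hd1 : Nat.card ↥(PA ⊓ PB : Subgroup G) ∣ Nat.card PA :=
      Subgroup.card_dvd_of_le inf_le_left
    have hd2 : Nat.card ↥(PA ⊓ PB : Subgroup G) ∣ Nat.card PB :=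
      Subgroup.card_dvd_of_le inf_le_right
    have := Nat.dvd_gcd hd1 hd2
    rw [hcopP.gcd_eq_one, Nat.dvd_one] at this
    exact Subgroup.eq_bot_of_card_eq _ this
  intro a ha b hb
  have haA : a ∈ PA := hAle ha
  have hbB : b ∈ PB := hBle hb
  have hc1 : a * b * a⁻¹ * b⁻¹ ∈ PA := by
    have : b * a⁻¹ * b⁻¹ ∈ PA := hPAn b trivial a⁻¹ (inv_mem haA)
    have := Subgroup.mul_mem _ haA this
    convert this using 1
    group
  have hc2 : a * b * a⁻¹ * b⁻¹ ∈ PB := by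
    have : a * b * a⁻¹ ∈ PB := hPBn a trivial b hbB
    exact Subgroup.mul_mem _ this (inv_mem hbB)
  have : a * b * a⁻¹ * b⁻¹ ∈ (⊥ : Subgroup G) := hinf ▸ ⟨hc1, hc2⟩
  rw [Subgroup.mem_bot] at this
  calc a * b = (a * b * a⁻¹ * b⁻¹) * (b * a) := by group
    _ = b * a := by rw [this, one_mul]

end Finite

end WielandtAux

/-- If `G = ⟨A, B⟩` with `A`, `B` subnormal and the images of `A` and `B` in
`G / F(G)` have coprime orders, then `G / F(G)` is the internal direct product
of these images. -/
theorem stmt_16 {G : Type*} [Group G] [Finite G] (A B : Subgroup G)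
    (hA : A.IsSubnormalChain) (hB : B.IsSubnormalChain)
    (hgen : A ⊔ B = ⊤)
    (hcop : Nat.Coprime
      (Nat.card (A.map (QuotientGroup.mk' (fittingSubgroup G))))
      (Nat.card (B.map (QuotientGroup.mk' (fittingSubgroup G))))) :
    A.map (QuotientGroup.mk' (fittingSubgroup G)) ⊓
        B.map (QuotientGroup.mk' (fittingSubgroup G)) = ⊥ ∧
    A.map (QuotientGroup.mk' (fittingSubgroup G)) ⊔
        B.map (QuotientGroup.mk' (fittingSubgroup G)) = ⊤ ∧
    (∀ x ∈ A.map (QuotientGroup.mk' (fittingSubgroup G)),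
      ∀ y ∈ B.map (QuotientGroup.mk' (fittingSubgroup G)), x * y = y * x) := by
  set f := QuotientGroup.mk' (fittingSubgroup G) with hf
  have hfsurj : Function.Surjective f := QuotientGroup.mk'_surjective _
  obtain ⟨nA, hSNA⟩ := WielandtAux.sn_of_isSubnormal hA
  obtain ⟨nB, hSNB⟩ := WielandtAux.sn_of_isSubnormal hB
  have hAbar : ∃ n, WielandtAux.SN n (A.map f) := ⟨nA, WielandtAux.sn_map f hfsurj nA A hSNA⟩
  have hBbar : ∃ n, WielandtAux.SN n (B.map f) := ⟨nB, WielandtAux.sn_map f hfsurj nB B hSNB⟩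
  refine ⟨?_, ?_, WielandtAux.commute_of_sn hAbar hBbar hcop⟩
  · have hd1 : Nat.card ↥(A.map f ⊓ B.map f) ∣ Nat.card (A.map f) :=
      Subgroup.card_dvd_of_le inf_le_left
    have hd2 : Nat.card ↥(A.map f ⊓ B.map f) ∣ Nat.card (B.map f) :=
      Subgroup.card_dvd_of_le inf_le_right
    have := Nat.dvd_gcd hd1 hd2
    rw [hcop.gcd_eq_one, Nat.dvd_one] at this
    exact Subgroup.eq_bot_of_card_eq _ this
  · rw [← Subgroup.map_sup, hgen]
    exact Subgroup.map_top_of_surjective f hfsurj
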